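/- Let c, m be positive integers, let A be a real c×c matrix with nonpositive off-diagonal entries, zero row sums and zero column sums, and let Z be a real m×c matrix. Then for every u : Fin m → ℝ, if Z *ᵥ (A *ᵥ (fun i => Real.exp ((Zᵀ *ᵥ u) i))) = 0 then already A *ᵥ (fun i => Real.exp ((Zᵀ *ᵥ u) i)) = 0. (Every positive equilibrium of the dynamics ẋ = −Z A Exp(Zᵀ Ln x) is complex-balanced.) -/
import Mathlib


open Matrix

lemma convex_aux (a b : ℝ) : 0 ≤ Real.exp b * (b - a) - Real.exp b + Real.exp a := by
  have h := Real.add_one_le_exp (a - b)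
  have he : Real.exp a = Real.exp (a - b) * Real.exp b := by
    rw [← Real.exp_add]; ring_nf
  nlinarith [Real.exp_pos b]

lemma convex_aux_strict (a b : ℝ) (hab : a ≠ b) :
    0 < Real.exp b * (b - a) - Real.exp b + Real.exp a := by
  have h := Real.add_one_lt_exp (x := a - b) (sub_ne_zero.mpr hab)
  have he : Real.exp a = Real.exp (a - b) * Real.exp b := by
    rw [← Real.exp_add]; ring_nf
  nlinarith [Real.exp_pos b]

theorem equilibrium_is_complex_balanced
    (c m : ℕ) (hc : 0 < c) (hm : 0 < m)
    (A : Matrix (Fin c) (Fin c) ℝ)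
    (hoff : ∀ i j, i ≠ j → A i j ≤ 0)
    (hrow : ∀ i, ∑ j, A i j = 0)
    (hcol : ∀ j, ∑ i, A i j = 0)
    (Z : Matrix (Fin m) (Fin c) ℝ) :
    ∀ u : Fin m → ℝ,
      Z *ᵥ (A *ᵥ (fun i => Real.exp ((Zᵀ *ᵥ u) i))) = 0 →
        A *ᵥ (fun i => Real.exp ((Zᵀ *ᵥ u) i)) = 0 := by
  intro u h
  set v : Fin c → ℝ := Zᵀ *ᵥ u with hv
  set x : Fin c → ℝ := fun i => Real.exp (v i) with hx
  -- the scalar equilibrium identity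
  have hdot : v ⬝ᵥ (A *ᵥ x) = 0 := by
    show (Zᵀ *ᵥ u) ⬝ᵥ (A *ᵥ x) = 0
    rw [Matrix.mulVec_transpose, ← Matrix.dotProduct_mulVec, h, dotProduct_zero]
  -- nonnegative summands
  set g : Fin c → Fin c → ℝ := fun i j =>
    (-A i j) * (Real.exp (v j) * (v j - v i) - Real.exp (v j) + Real.exp (v i)) with hg
  have hgnn : ∀ i j, 0 ≤ g i j := by
    intro i j
    rcases eq_or_ne i j with rfl | hne
    · have : g i i = 0 := by simp [hg]
      rw [this]
    · exact mul_nonneg (neg_nonneg.2 (hoff i j hne)) (convex_aux (v i) (v j))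
  have hsum : ∑ i, ∑ j, g i j = v ⬝ᵥ (A *ᵥ x) := by
    have expand : ∀ i j : Fin c, g i j =
        A i j * (Real.exp (v j) * v i) - A i j * (Real.exp (v j) * v j)
          + A i j * Real.exp (v j) - A i j * Real.exp (v i) := by
      intro i j; simp only [hg]; ring
    have h1 : ∑ i, ∑ j, A i j * (Real.exp (v j) * v j) = 0 := by
      rw [Finset.sum_comm]
      refine Finset.sum_eq_zero fun j _ => ?_
      rw [← Finset.sum_mul, hcol, zero_mul]
    have h2 : ∑ i, ∑ j, A i j * Real.exp (v j) = 0 := by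
      rw [Finset.sum_comm]
      refine Finset.sum_eq_zero fun j _ => ?_
      rw [← Finset.sum_mul, hcol, zero_mul]
    have h3 : ∑ i, ∑ j, A i j * Real.exp (v i) = 0 := by
      refine Finset.sum_eq_zero fun i _ => ?_
      rw [← Finset.sum_mul, hrow, zero_mul]
    have h0 : ∑ i, ∑ j, A i j * (Real.exp (v j) * v i) = v ⬝ᵥ (A *ᵥ x) := by
      simp only [dotProduct, mulVec, hx, Finset.mul_sum]
      refine Finset.sum_congr rfl fun i _ => Finset.sum_congr rfl fun j _ => ?_
      ring
    calc ∑ i, ∑ j, g i j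
        = ∑ i, ∑ j, (A i j * (Real.exp (v j) * v i) - A i j * (Real.exp (v j) * v j)
            + A i j * Real.exp (v j) - A i j * Real.exp (v i)) := by
          exact Finset.sum_congr rfl fun i _ => Finset.sum_congr rfl fun j _ => expand i j
      _ = (∑ i, ∑ j, A i j * (Real.exp (v j) * v i))
            - (∑ i, ∑ j, A i j * (Real.exp (v j) * v j))
            + (∑ i, ∑ j, A i j * Real.exp (v j))
            - (∑ i, ∑ j, A i j * Real.exp (v i)) := by
          simp [Finset.sum_add_distrib, Finset.sum_sub_distrib]
      _ = v ⬝ᵥ (A *ᵥ x) := by rw [h0, h1, h2, h3]; ring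
  have hzero : ∀ i j, g i j = 0 := by
    have htot : ∑ i, ∑ j, g i j = 0 := by rw [hsum, hdot]
    intro i j
    have hrow0 : ∀ i, ∑ j, g i j = 0 := by
      intro i
      have := (Finset.sum_eq_zero_iff_of_nonneg
        (fun i _ => Finset.sum_nonneg fun j _ => hgnn i j)).1 htot
      exact this i (Finset.mem_univ i)
    exact (Finset.sum_eq_zero_iff_of_nonneg (fun j _ => hgnn i j)).1 (hrow0 i) j
      (Finset.mem_univ j)
  have key : ∀ i j, A i j * Real.exp (v j) = A i j * Real.exp (v i) := by
    intro i j
    rcases eq_or_ne i j with rfl | hne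
    · rfl
    · have := hzero i j
      rcases mul_eq_zero.1 this with hA | hf
      · have : A i j = 0 := by linarith [neg_eq_zero.1 hA]
        rw [this]; ring
      · by_cases hvij : v i = v j
        · rw [hvij]
        · exact absurd hf (convex_aux_strict (v i) (v j) hvij).ne'
  funext i
  show ∑ j, A i j * x j = 0
  calc ∑ j, A i j * x j = ∑ j, A i j * Real.exp (v i) :=
        Finset.sum_congr rfl fun j _ => key i j
    _ = (∑ j, A i j) * Real.exp (v i) := by rw [Finset.sum_mul]
    _ = 0 := by rw [hrow, zero_mul]
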